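/- Suppose S ⊆ {0,1}^ω has the property that for every infinite J ⊆ ω and every f : J → ⋃_{n∈ω} {0,1}^n there exists {a_n} ∈ S such that for infinitely many i ∈ J the sequence {a_{i+n}}_{n∈ω} extends f(i). Then for every ε > 0 and every open set U ⊆ (0,ε) with 0 ∈ closure(U), there exists g ∈ S such that the sequence of tails {∑_{k=n}^∞ g(k)/2^k}_{n∈ω} has infinitely many terms in U. -/

import Mathlib

private lemma bits (m : ℕ) : ∀ p : ℕ, p < 2 ^ m → ∀ i : ℕ, ∃ w : Fin m → Bool,
    ∑ j : Fin m, (if w j then (1 : ℝ) else 0) / 2 ^ (i + (j : ℕ)) = 2 * p / 2 ^ (i + m) := by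
  induction m with
  | zero =>
    intro p hp i
    interval_cases p
    exact ⟨Fin.elim0, by simp⟩
  | succ m ih =>
    intro p hp i
    rcases lt_or_ge p (2 ^ m) with h | h
    · obtain ⟨w', hw'⟩ := ih p h (i + 1)
      refine ⟨Fin.cons false w', ?_⟩
      rw [Fin.sum_univ_succ]
      simp only [Fin.cons_zero, Fin.cons_succ, if_neg (Bool.false_ne_true)]
      have : ∀ j : Fin m, i + ((j.succ : Fin (m+1)) : ℕ) = (i + 1) + (j : ℕ) := by
        intro j; simp [Fin.val_succ]; omega
      rw [Finset.sum_congr rfl (fun j _ => by rw [this j]), hw']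
      have : i + (m + 1) = (i + 1) + m := by omega
      rw [this]
      ring
    · obtain ⟨q, rfl⟩ := Nat.exists_eq_add_of_le h
      have hq : q < 2 ^ m := by
        have : 2 ^ (m + 1) = 2 ^ m + 2 ^ m := by ring
        omega
      obtain ⟨w', hw'⟩ := ih q hq (i + 1)
      refine ⟨Fin.cons true w', ?_⟩
      rw [Fin.sum_univ_succ]
      simp only [Fin.cons_zero, Fin.cons_succ, if_pos rfl]
      have : ∀ j : Fin m, i + ((j.succ : Fin (m+1)) : ℕ) = (i + 1) + (j : ℕ) := by
        intro j; simp [Fin.val_succ]; omega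
      rw [Finset.sum_congr rfl (fun j _ => by rw [this j]), hw']
      push_cast
      have h1 : (2 : ℝ) ^ (i + (m + 1)) = 2 ^ i * 2 ^ (m + 1) := by rw [pow_add]
      have h2 : (2 : ℝ) ^ ((i + 1) + m) = 2 ^ i * 2 ^ (m + 1) := by
        rw [show (i+1)+m = i + (m+1) by omega, pow_add]
      have h3 : (2 : ℝ) ^ (m + 1) = 2 * 2 ^ m := by ring
      rw [h1, h2, h3]
      have : (2:ℝ) ^ i ≠ 0 := by positivity
      have : (2:ℝ) ^ m ≠ 0 := by positivity
      field_simp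
      simp only [Fin.val_zero]
      ring

private lemma summable_tail (a : ℕ → Bool) (n : ℕ) :
    Summable (fun k => (if a (n + k) then (1 : ℝ) else 0) / 2 ^ (n + k)) := by
  apply Summable.of_nonneg_of_le (fun k => by positivity)
    (fun k => ?_) ((summable_geometric_two).mul_left ((1/2 : ℝ) ^ n))
  have : (if a (n + k) then (1:ℝ) else 0) / 2 ^ (n + k) ≤ 1 / 2 ^ (n + k) := by
    gcongr
    split <;> norm_num
  refine this.trans (le_of_eq ?_)
  rw [div_pow, div_pow, one_pow, div_mul_div_comm, one_mul, ← pow_add, one_pow]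


private lemma tail_nonneg (a : ℕ → Bool) (n : ℕ) :
    0 ≤ ∑' k : ℕ, (if a (n + k) then (1 : ℝ) else 0) / 2 ^ (n + k) :=
  tsum_nonneg (fun k => by positivity)

private lemma tail_le (a : ℕ → Bool) (n : ℕ) :
    (∑' k : ℕ, (if a (n + k) then (1 : ℝ) else 0) / 2 ^ (n + k)) ≤ 2 * (1/2 : ℝ) ^ n := by
  have h1 : (∑' k : ℕ, (if a (n + k) then (1 : ℝ) else 0) / 2 ^ (n + k))
      ≤ ∑' k : ℕ, (1/2 : ℝ) ^ n * (1/2) ^ k := by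
    apply Summable.tsum_le_tsum _ (summable_tail a n) ((summable_geometric_two).mul_left _)
    intro k
    have h : (if a (n + k) then (1:ℝ) else 0) / 2 ^ (n + k) ≤ 1 / 2 ^ (n + k) := by
      gcongr
      split <;> norm_num
    refine h.trans (le_of_eq ?_)
    rw [div_pow, div_pow, one_pow, div_mul_div_comm, one_mul, ← pow_add, one_pow]
  rw [tsum_mul_left, tsum_geometric_two] at h1
  linarith

private lemma tail_split (a : ℕ → Bool) (n m : ℕ) :
    (∑' k : ℕ, (if a (n + k) then (1 : ℝ) else 0) / 2 ^ (n + k))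
      = (∑ j ∈ Finset.range m, (if a (n + j) then (1 : ℝ) else 0) / 2 ^ (n + j))
        + ∑' k : ℕ, (if a (n + m + k) then (1 : ℝ) else 0) / 2 ^ (n + m + k) := by
  rw [← Summable.sum_add_tsum_nat_add m (summable_tail a n)]
  congr 1
  apply tsum_congr
  intro k
  rw [show n + (k + m) = n + m + k by omega]

private lemma key (U : Set ℝ) (hU : IsOpen U) (hUpos : ∀ x ∈ U, 0 < x)
    (h0 : (0 : ℝ) ∈ closure U) (i : ℕ) :
    ∃ m : ℕ, ∃ w : Fin m → Bool, ∀ a : ℕ → Bool,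
      (∀ j : Fin m, a (i + (j : ℕ)) = w j) →
      (∑' k : ℕ, (if a (i + k) then (1 : ℝ) else 0) / 2 ^ (i + k)) ∈ U := by
  -- pick x ∈ U close to 0
  obtain ⟨x, hxU, hxd⟩ := Metric.mem_closure_iff.mp h0 ((1/2 : ℝ) ^ i) (by positivity)
  have hx0 : 0 < x := hUpos x hxU
  have hxlt : x < (1/2 : ℝ) ^ i := by
    rwa [dist_comm, Real.dist_eq, sub_zero, abs_of_pos hx0] at hxd
  obtain ⟨δ, hδ0, hball⟩ := Metric.isOpen_iff.mp hU x hxU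
  obtain ⟨n₀, hn₀⟩ := exists_pow_lt_of_lt_one (show (0:ℝ) < δ/4 by linarith)
    (by norm_num : (1/2 : ℝ) < 1)
  set N := max (i + 1) n₀ with hN
  have hNn : (1/2 : ℝ) ^ N ≤ (1/2) ^ n₀ :=
    pow_le_pow_of_le_one (by norm_num) (by norm_num) (le_max_right _ _)
  have hNδ : (1/2 : ℝ) ^ N < δ/4 := lt_of_le_of_lt hNn hn₀
  set m := N - i with hm
  have hiN : i + m = N := by have := le_max_left (i+1) n₀; omega
  set p := ⌊x * 2 ^ N / 2⌋₊ with hp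
  have hp1 : (p : ℝ) ≤ x * 2 ^ N / 2 := Nat.floor_le (by positivity)
  have hp2 : x * 2 ^ N / 2 < p + 1 := Nat.lt_floor_add_one _
  have h2N : (2:ℝ) ^ N = 2 ^ i * 2 ^ m := by rw [← pow_add, show i + m = N from hiN]
  have hhalf : (1/2 : ℝ) ^ i = 1 / 2 ^ i := by rw [div_pow, one_pow]
  have hpm : p < 2 ^ m := by
    have : (p : ℝ) < 2 ^ m := by
      have hx2 : x * 2 ^ N < 2 ^ m * 2 := by
        rw [h2N]
        calc x * (2 ^ i * 2 ^ m) < (1/2:ℝ)^i * (2 ^ i * 2 ^ m) := by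
              apply mul_lt_mul_of_pos_right hxlt (by positivity)
          _ ≤ 2 ^ m * 2 := by
              rw [hhalf]
              rw [div_mul_eq_mul_div, one_mul, mul_comm ((2:ℝ)^i), mul_div_assoc,
                div_self (by positivity : (2:ℝ)^i ≠ 0), mul_one]
              nlinarith [pow_pos (show (0:ℝ) < 2 by norm_num) m]
      linarith
    exact_mod_cast this
  obtain ⟨w, hw⟩ := bits m p hpm i
  refine ⟨m, w, fun a ha => ?_⟩
  -- split the tail sum
  rw [tail_split a i m]
  set R := ∑' k : ℕ, (if a (i + m + k) then (1 : ℝ) else 0) / 2 ^ (i + m + k) with hR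
  have hR0 : 0 ≤ R := tail_nonneg a (i + m)
  have hRle : R ≤ 2 * (1/2 : ℝ) ^ N :=
    (tail_le a (i + m)).trans (le_of_eq (by rw [hiN]))
  have hpre : (∑ j ∈ Finset.range m, (if a (i + j) then (1 : ℝ) else 0) / 2 ^ (i + j))
      = 2 * p / 2 ^ N := by
    rw [← hiN]
    rw [← hw, ← Fin.sum_univ_eq_sum_range (fun j => (if a (i + j) then (1 : ℝ) else 0) / 2 ^ (i + j))]
    exact Finset.sum_congr rfl (fun j _ => by rw [ha j])
  rw [hpre]
  apply hball
  rw [Metric.mem_ball, Real.dist_eq, abs_lt]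
  have hs1 : 2 * (p:ℝ) / 2 ^ N ≤ x := by
    rw [div_le_iff₀ (by positivity)]
    linarith
  have hs2 : x - 2 * (1/2 : ℝ) ^ N < 2 * (p:ℝ) / 2 ^ N := by
    have h2 : (1/2 : ℝ) ^ N = 1 / 2 ^ N := by rw [div_pow, one_pow]
    have hN0 : (0:ℝ) < (2:ℝ) ^ N := by positivity
    have e1 : x < (2 * (p:ℝ) + 2) / 2 ^ N := by
      rw [lt_div_iff₀ hN0]; linarith
    have e2 : (2 * (p:ℝ) + 2) / 2 ^ N = 2 * (p:ℝ) / 2 ^ N + 2 * (1/2 : ℝ) ^ N := by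
      rw [h2]; ring
    linarith
  constructor
  · linarith
  · linarith


theorem stmt4 (S : Set (ℕ → Bool))
    (hS : ∀ (J : Set ℕ), J.Infinite → ∀ f : J → Σ n : ℕ, Fin n → Bool,
      ∃ a ∈ S, {i : J | ∀ j : Fin (f i).1, a ((i : ℕ) + (j : ℕ)) = (f i).2 j}.Infinite)
    (ε : ℝ) (hε : 0 < ε) (U : Set ℝ) (hU : IsOpen U) (hUε : U ⊆ Set.Ioo 0 ε)
    (h0 : (0 : ℝ) ∈ closure U) :
    ∃ g ∈ S, {n : ℕ | (∑' k : ℕ, (if g (n + k) then (1 : ℝ) else 0) / 2 ^ (n + k)) ∈ U}.Infinite := by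
  have hUpos : ∀ x ∈ U, 0 < x := fun x hx => (hUε hx).1
  choose m w hw using key U hU hUpos h0
  let f : ↥(Set.univ : Set ℕ) → Σ n : ℕ, Fin n → Bool := fun i => ⟨m (i : ℕ), w (i : ℕ)⟩
  obtain ⟨a, haS, hinf⟩ := hS Set.univ Set.infinite_univ f
  refine ⟨a, haS, ?_⟩
  have himg : (Subtype.val '' {i : ↥(Set.univ : Set ℕ) |
      ∀ j : Fin (f i).1, a ((i : ℕ) + (j : ℕ)) = (f i).2 j}).Infinite :=
    hinf.image (Set.injOn_of_injective Subtype.val_injective)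
  apply himg.mono
  rintro n ⟨i, hi, rfl⟩
  exact hw (i : ℕ) a hi
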